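/- For each i ∈ D let p_i : 2^{D∖{i}} → [0,∞) satisfy Σ_{A ⊆ D∖{i}} p_i(A) = 1, and for a map τ : 2^D → ℝ define I({i}) = Σ_{A ⊆ D∖{i}} p_i(A) (τ(A ∪ {i}) − τ(A)). Then the identity Σ_{i=1}^d I({i}) = τ(D) holds for every map τ : 2^D → [0,∞) with τ(∅) = 0 if and only if the following three conditions hold: (1) Σ_{i=1}^d p_i(∅) = 1; (2) for every A ⊆ D with A ≠ ∅ and A ≠ D, Σ_{i=1}^d (−1)^{1 − |A ∩ {i}|} p_i(A ∖ {i}) = 0 (equivalently, Σ_{i ∈ A} p_i(A∖{i}) = Σ_{i ∈ D∖A} p_i(A)); (3) Σ_{i=1}^d p_i(D ∖ {i}) = 1. -/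

import Mathlib

open Finset

/-- Proposition 4: with main effects `I({i}) = Σ_{A ⊆ D∖{i}} p_i(A)(τ(A∪{i}) − τ(A))`,
the identity `Σ_{i=1}^d I({i}) = τ(D)` holds for every nonnegative `τ` with `τ(∅) = 0`
if and only if the three conditions on the weights hold. -/
theorem stmt10 {d : ℕ} (hd : 1 ≤ d) (p : Fin d → Finset (Fin d) → ℝ)
    (hp0 : ∀ i A, 0 ≤ p i A)
    (hpz : ∀ (i : Fin d) (A : Finset (Fin d)), ¬ A ⊆ ({i} : Finset (Fin d))ᶜ → p i A = 0)
    (hp1 : ∀ i : Fin d, ∑ A ∈ (({i} : Finset (Fin d))ᶜ).powerset, p i A = 1) :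
    (∀ τ : Finset (Fin d) → ℝ, (∀ A, 0 ≤ τ A) → τ ∅ = 0 →
        ∑ i : Fin d, ∑ A ∈ (({i} : Finset (Fin d))ᶜ).powerset,
          p i A * (τ (A ∪ {i}) - τ A) = τ Finset.univ)
    ↔ ((∑ i : Fin d, p i ∅ = 1) ∧
       (∀ A : Finset (Fin d), A ≠ ∅ → A ≠ Finset.univ →
          ∑ i : Fin d, (-1 : ℝ) ^ (1 - (A ∩ {i}).card) * p i (A \ {i}) = 0) ∧
       (∑ i : Fin d, p i (({i} : Finset (Fin d))ᶜ) = 1)) := by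
  classical
  have : Nonempty (Fin d) := ⟨⟨0, hd⟩⟩
  have huniv_ne : (Finset.univ : Finset (Fin d)) ≠ ∅ := Finset.univ_nonempty.ne_empty
  set c : Finset (Fin d) → ℝ := fun B =>
    ∑ i : Fin d, ((if i ∈ B then p i (B \ {i}) else 0) - (if i ∉ B then p i B else 0)) with hc
  have hsub : ∀ (i : Fin d) (A : Finset (Fin d)), A ⊆ ({i} : Finset (Fin d))ᶜ ↔ i ∉ A := by
    intro i A
    constructor
    · intro h hi
      simpa using h hi
    · intro hi x hx
      simp only [Finset.mem_compl, Finset.mem_singleton]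
      rintro rfl; exact hi hx
  have hcup : ∀ (i : Fin d) (A : Finset (Fin d)), i ∉ A → (A ∪ {i}) \ {i} = A := by
    intro i A hi
    ext x
    simp only [Finset.mem_sdiff, Finset.mem_union, Finset.mem_singleton]
    constructor
    · rintro ⟨hx | rfl, hxi⟩
      · exact hx
      · exact absurd rfl hxi
    · intro hx
      exact ⟨Or.inl hx, fun h => hi (h ▸ hx)⟩
  have key : ∀ τ : Finset (Fin d) → ℝ,
      (∑ i : Fin d, ∑ A ∈ (({i} : Finset (Fin d))ᶜ).powerset,
        p i A * (τ (A ∪ {i}) - τ A)) = ∑ B : Finset (Fin d), c B * τ B := by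
    intro τ
    have step : ∀ i : Fin d,
        ∑ A ∈ (({i} : Finset (Fin d))ᶜ).powerset, p i A * (τ (A ∪ {i}) - τ A)
        = ∑ B : Finset (Fin d),
            ((if i ∈ B then p i (B \ {i}) else 0) - (if i ∉ B then p i B else 0)) * τ B := by
      intro i
      have e1 : ∑ A ∈ (({i} : Finset (Fin d))ᶜ).powerset, p i A * τ (A ∪ {i})
          = ∑ B : Finset (Fin d), (if i ∈ B then p i (B \ {i}) else 0) * τ B := by
        have : ∑ B : Finset (Fin d), (if i ∈ B then p i (B \ {i}) else 0) * τ B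
            = ∑ B ∈ Finset.univ.filter (fun B => i ∈ B), p i (B \ {i}) * τ B := by
          rw [Finset.sum_filter]
          exact Finset.sum_congr rfl fun B _ => by split <;> simp
        rw [this]
        refine Finset.sum_bij' (fun A _ => A ∪ {i}) (fun B _ => B \ {i}) ?_ ?_ ?_ ?_ ?_
        · intro A hA
          simp
        · intro B hB
          rw [Finset.mem_powerset, hsub]
          simp
        · intro A hA
          exact hcup i A ((hsub i A).mp (Finset.mem_powerset.mp hA))
        · intro B hB
          exact Finset.sdiff_union_of_subset
            (Finset.singleton_subset_iff.mpr (by simpa using hB))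
        · intro A hA
          rw [hcup i A ((hsub i A).mp (Finset.mem_powerset.mp hA))]
      have e2 : ∑ A ∈ (({i} : Finset (Fin d))ᶜ).powerset, p i A * τ A
          = ∑ B : Finset (Fin d), (if i ∉ B then p i B else 0) * τ B := by
        have hpow : (({i} : Finset (Fin d))ᶜ).powerset
            = Finset.univ.filter (fun B => i ∉ B) := by
          ext A
          simp [Finset.mem_powerset, hsub]
        rw [hpow, Finset.sum_filter]
        exact Finset.sum_congr rfl fun B _ => by split <;> simp
      calc ∑ A ∈ (({i} : Finset (Fin d))ᶜ).powerset, p i A * (τ (A ∪ {i}) - τ A)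
          = ∑ A ∈ (({i} : Finset (Fin d))ᶜ).powerset,
              (p i A * τ (A ∪ {i}) - p i A * τ A) := by
            exact Finset.sum_congr rfl fun A _ => by ring
        _ = (∑ A ∈ (({i} : Finset (Fin d))ᶜ).powerset, p i A * τ (A ∪ {i}))
            - ∑ A ∈ (({i} : Finset (Fin d))ᶜ).powerset, p i A * τ A :=
            Finset.sum_sub_distrib _ _
        _ = (∑ B : Finset (Fin d), (if i ∈ B then p i (B \ {i}) else 0) * τ B)
            - ∑ B : Finset (Fin d), (if i ∉ B then p i B else 0) * τ B := by rw [e1, e2]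
        _ = _ := by rw [← Finset.sum_sub_distrib]; exact Finset.sum_congr rfl fun B _ => by ring
    rw [Finset.sum_congr rfl fun i _ => step i, Finset.sum_comm]
    exact Finset.sum_congr rfl fun B _ => by rw [hc]; rw [Finset.sum_mul]
  have hcuniv : c Finset.univ = ∑ i : Fin d, p i (({i} : Finset (Fin d))ᶜ) := by
    rw [hc]
    exact Finset.sum_congr rfl fun i _ => by
      simp [Finset.compl_eq_univ_sdiff]
  have hcA : ∀ A : Finset (Fin d),
      (∑ i : Fin d, (-1 : ℝ) ^ (1 - (A ∩ {i}).card) * p i (A \ {i})) = c A := by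
    intro A
    rw [hc]
    refine Finset.sum_congr rfl fun i _ => ?_
    by_cases hi : i ∈ A
    · have h1 : A ∩ {i} = {i} := by
        ext x; simp only [Finset.mem_inter, Finset.mem_singleton]
        constructor
        · rintro ⟨_, rfl⟩; rfl
        · rintro rfl; exact ⟨hi, rfl⟩
      simp [hi, h1]
    · have h1 : A ∩ {i} = ∅ := by
        ext x; simp only [Finset.mem_inter, Finset.mem_singleton, Finset.notMem_empty,
          iff_false, not_and]
        rintro hx rfl; exact hi hx
      have h2 : A \ {i} = A := by
        ext x; simp only [Finset.mem_sdiff, Finset.mem_singleton]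
        constructor
        · exact fun h => h.1
        · intro hx; exact ⟨hx, fun h => hi (h ▸ hx)⟩
      simp [hi, h1, h2]
  constructor
  · intro H
    refine ⟨?_, ?_, ?_⟩
    · -- condition 1
      have hτ := H (fun A => if A = ∅ then 0 else 1)
        (by intro A; split <;> norm_num) (by simp)
      beta_reduce at hτ
      have step : ∀ i : Fin d,
          ∑ A ∈ (({i} : Finset (Fin d))ᶜ).powerset,
            p i A * ((if A ∪ {i} = ∅ then (0:ℝ) else 1) - (if A = ∅ then 0 else 1)) = p i ∅ := by
        intro i
        rw [Finset.sum_eq_single_of_mem ∅ (Finset.mem_powerset.mpr (Finset.empty_subset _))]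
        · have : (∅ : Finset (Fin d)) ∪ {i} ≠ ∅ := by simp
          simp [this]
        · intro A _ hA
          have h1 : A ∪ {i} ≠ ∅ := by
            intro h; exact (Finset.singleton_ne_empty i) (Finset.subset_empty.mp (h ▸ Finset.subset_union_right))
          simp [hA, h1]
      rw [Finset.sum_congr rfl fun i _ => step i] at hτ
      rw [hτ, if_neg huniv_ne]
    · -- condition 2
      intro A hA hAu
      have hτ := H (fun B => if B = A then 1 else 0)
        (by intro B; split <;> norm_num)
        (by rw [if_neg (fun h => hA h.symm)])
      rw [key (fun B => if B = A then 1 else 0)] at hτ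
      beta_reduce at hτ
      have hl : ∑ B : Finset (Fin d), c B * (if B = A then (1:ℝ) else 0) = c A := by
        rw [Finset.sum_congr rfl (fun B _ => by rw [mul_ite, mul_one, mul_zero]),
          Finset.sum_ite_eq' Finset.univ A c, if_pos (Finset.mem_univ A)]
      rw [hl, if_neg (fun h => hAu h.symm)] at hτ
      rw [hcA A, hτ]
    · -- condition 3
      have hτ := H (fun B => if B = Finset.univ then 1 else 0)
        (by intro B; split <;> norm_num)
        (by rw [if_neg (fun h => huniv_ne h.symm)])
      rw [key (fun B => if B = Finset.univ then 1 else 0)] at hτ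
      beta_reduce at hτ
      have hl : ∑ B : Finset (Fin d), c B * (if B = Finset.univ then (1:ℝ) else 0) = c Finset.univ := by
        rw [Finset.sum_congr rfl (fun B _ => by rw [mul_ite, mul_one, mul_zero]),
          Finset.sum_ite_eq' Finset.univ Finset.univ c, if_pos (Finset.mem_univ _)]
      rw [hl, if_pos rfl] at hτ
      rw [← hcuniv, hτ]
  · rintro ⟨h1, h2, h3⟩ τ hτ0 hτe
    rw [key]
    have hterm : ∀ B : Finset (Fin d), c B * τ B = if B = Finset.univ then τ Finset.univ else 0 := by
      intro B
      by_cases hB : B = Finset.univ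
      · subst hB
        rw [if_pos rfl, hcuniv, h3, one_mul]
      · rw [if_neg hB]
        by_cases hB0 : B = ∅
        · subst hB0; rw [hτe, mul_zero]
        · rw [← hcA B, h2 B hB0 hB, zero_mul]
    rw [Finset.sum_congr rfl fun B _ => hterm B, Finset.sum_ite_eq' Finset.univ Finset.univ,
      if_pos (Finset.mem_univ _)]
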